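/- Let l, k > 0 and d ≥ 0, and assume l² ≥ d² + k². Define h(v) = 1 + (m(v) + (4dlv − k((d+l)² + k²))·√(m(v))) / (8k²l²(k−v)v), where m(v) = 16l²(d²+k²)v² − 8lk(dk² + d³ + 2ld² + l²d + 2k²l)v + k²(2dl + l² + d² + k²)², and let v_ε = (1/2)·k·((d+l)² + k²)/(k² + d² + l²). With G = (d+l)² + k², H = (d−l)² + k² and I = l² − d² − k², one has h(v_ε) = 1 + I·(I − √(G·H))/(2k²l²); moreover h(v_ε) < 1 if I > 0, and h(v_ε) = 1 if I = 0. -/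

import Mathlib

theorem stmt_8 (l k d : ℝ) (hl : 0 < l) (hk : 0 < k) (hd : 0 ≤ d)
    (hge : d ^ 2 + k ^ 2 ≤ l ^ 2)
    (m h : ℝ → ℝ)
    (hm : ∀ v, m v = 16 * l ^ 2 * (d ^ 2 + k ^ 2) * v ^ 2
      - 8 * l * k * (d * k ^ 2 + d ^ 3 + 2 * l * d ^ 2 + l ^ 2 * d + 2 * k ^ 2 * l) * v
      + k ^ 2 * (2 * d * l + l ^ 2 + d ^ 2 + k ^ 2) ^ 2)
    (hh : ∀ v ∈ Set.Ioo (0 : ℝ) k,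
      h v = 1 + (m v + (4 * d * l * v - k * ((d + l) ^ 2 + k ^ 2)) * Real.sqrt (m v))
        / (8 * k ^ 2 * l ^ 2 * (k - v) * v))
    (vε G H I : ℝ)
    (hvε : vε = 1 / 2 * k * ((d + l) ^ 2 + k ^ 2) / (k ^ 2 + d ^ 2 + l ^ 2))
    (hG : G = (d + l) ^ 2 + k ^ 2) (hH : H = (d - l) ^ 2 + k ^ 2)
    (hI : I = l ^ 2 - d ^ 2 - k ^ 2) :
    h vε = 1 + I * (I - Real.sqrt (G * H)) / (2 * k ^ 2 * l ^ 2) ∧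
    (0 < I → h vε < 1) ∧
    (I = 0 → h vε = 1) := by
  have hSpos : (0:ℝ) < k ^ 2 + d ^ 2 + l ^ 2 := by positivity
  have hSne : (k ^ 2 + d ^ 2 + l ^ 2 : ℝ) ≠ 0 := ne_of_gt hSpos
  have hGpos : 0 < G := by rw [hG]; positivity
  have hHpos : 0 < H := by rw [hH]; positivity
  have hInn : 0 ≤ I := by rw [hI]; linarith
  have hkne : (k:ℝ) ≠ 0 := ne_of_gt hk
  have hlne : (l:ℝ) ≠ 0 := ne_of_gt hl
  -- vε ∈ Ioo 0 k
  have hvpos : 0 < vε := by rw [hvε]; positivity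
  have hkv : k - vε = k * ((d - l) ^ 2 + k ^ 2) / (2 * (k ^ 2 + d ^ 2 + l ^ 2)) := by
    rw [hvε]; field_simp; ring
  have hvlt : vε < k := by
    have : 0 < k - vε := by rw [hkv]; positivity
    linarith
  -- value of m at vε
  have mval : m vε = (k * (l ^ 2 - d ^ 2 - k ^ 2) / (k ^ 2 + d ^ 2 + l ^ 2)) ^ 2 * (G * H) := by
    rw [hm, hvε, hG, hH]; field_simp; ring
  have hcoef : 0 ≤ k * (l ^ 2 - d ^ 2 - k ^ 2) / (k ^ 2 + d ^ 2 + l ^ 2) := by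
    apply div_nonneg _ (le_of_lt hSpos)
    have : 0 ≤ l ^ 2 - d ^ 2 - k ^ 2 := by linarith
    positivity
  have hsqrt : Real.sqrt (m vε)
      = k * (l ^ 2 - d ^ 2 - k ^ 2) / (k ^ 2 + d ^ 2 + l ^ 2) * Real.sqrt (G * H) := by
    rw [mval, Real.sqrt_mul (sq_nonneg _), Real.sqrt_sq hcoef]
  -- the main formula
  have hGHne : G * H ≠ 0 := by positivity
  have mval2 : m vε = k ^ 2 * I ^ 2 / (k ^ 2 + d ^ 2 + l ^ 2) ^ 2 * (G * H) := by
    rw [mval, hI]; field_simp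
  have hsqrt2 : Real.sqrt (m vε)
      = k * I / (k ^ 2 + d ^ 2 + l ^ 2) * Real.sqrt (G * H) := by
    rw [hsqrt, hI]
  have hB : 4 * d * l * vε - k * ((d + l) ^ 2 + k ^ 2)
      = -(k * (G * H) / (k ^ 2 + d ^ 2 + l ^ 2)) := by
    rw [hvε, hG, hH]; field_simp; ring
  have hC : 8 * k ^ 2 * l ^ 2 * (k - vε) * vε
      = 2 * k ^ 4 * l ^ 2 * (G * H) / (k ^ 2 + d ^ 2 + l ^ 2) ^ 2 := by
    rw [hvε, hG, hH]; field_simp; ring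
  have main : h vε = 1 + I * (I - Real.sqrt (G * H)) / (2 * k ^ 2 * l ^ 2) := by
    rw [hh vε ⟨hvpos, hvlt⟩, hsqrt2, mval2, hB, hC]
    field_simp
    ring
  refine ⟨main, ?_, ?_⟩
  · intro hIpos
    have hsq : I ^ 2 < G * H := by
      have h1 : G * H - I ^ 2 = 4 * k ^ 2 * l ^ 2 := by rw [hG, hH, hI]; ring
      have h2 : (0:ℝ) < 4 * k ^ 2 * l ^ 2 := by positivity
      linarith
    have hIs : I < Real.sqrt (G * H) := by
      rw [show I = Real.sqrt (I ^ 2) by rw [Real.sqrt_sq hInn]]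
      exact Real.sqrt_lt_sqrt (sq_nonneg _) hsq
    have : I * (I - Real.sqrt (G * H)) / (2 * k ^ 2 * l ^ 2) < 0 := by
      apply div_neg_of_neg_of_pos
      · exact mul_neg_of_pos_of_neg hIpos (by linarith)
      · positivity
    rw [main]; linarith
  · intro hI0
    rw [main, hI0]; ring
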